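/- arXiv:0906.1782 — 2 statements merged into one kernel-verified Lean document; each statement's English description precedes it below -/
import Mathlib

section
/- Let $(M_t)_{t\ge0}$ be a continuous uniformly integrable martingale with terminal value $M_\infty$, and let $g=\sup\{t\ge0: M_t=0\}$. Then for every $t\ge0$, almost surely $|M_t| = \mathbb{E}[|M_\infty|\,\mathbf{1}_{g\le t}\mid \mathcal{F}_t]$. -/
open MeasureTheory Filter Set
open scoped NNReal ENNReal Topology



namespace Stmt1Aux

variable {Ω : Type*} {m : MeasurableSpace Ω}

/-- A zero of a continuous function on a compact interval is detected by a countable dense set. -/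
lemma measurableSet_hasZero (𝓕 : Filtration ℝ≥0 m) (M : ℝ≥0 → Ω → ℝ)
    (hadp : ∀ i, StronglyMeasurable[𝓕 i] (M i))
    (hcont : ∀ ω, Continuous fun t => M t ω) (a b : ℝ≥0) :
    MeasurableSet[𝓕 b] {ω | ∃ u ∈ Icc a b, M u ω = 0} := by
  obtain ⟨D, hDc, hDd⟩ := TopologicalSpace.exists_countable_dense ℝ≥0
  have hSc : (insert a (insert b D) ∩ Icc a b).Countable :=
    ((hDc.insert b).insert a).mono inter_subset_left
  have hkey : {ω | ∃ u ∈ Icc a b, M u ω = 0} =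
      ⋂ n : ℕ, ⋃ q ∈ insert a (insert b D) ∩ Icc a b,
        {ω | |M q ω| < ((n : ℝ) + 1)⁻¹} := by
    ext ω
    simp only [mem_setOf_eq, mem_iInter, mem_iUnion, exists_prop]
    constructor
    · rintro ⟨u, hu, hu0⟩ n
      have hpos : (0 : ℝ) < ((n : ℝ) + 1)⁻¹ := by positivity
      have hV : IsOpen {s : ℝ≥0 | |M s ω| < ((n : ℝ) + 1)⁻¹} :=
        isOpen_lt (by continuity) continuous_const
      have huV : u ∈ {s : ℝ≥0 | |M s ω| < ((n : ℝ) + 1)⁻¹} := by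
        simp [mem_setOf_eq, hu0, hpos]
      rcases eq_or_ne u a with rfl | hua
      · exact ⟨u, ⟨mem_insert _ _, hu⟩, huV⟩
      rcases eq_or_ne u b with rfl | hub
      · exact ⟨u, ⟨mem_insert_of_mem _ (mem_insert _ _), hu⟩, huV⟩
      have hu_mem : u ∈ Ioo a b := ⟨lt_of_le_of_ne hu.1 (Ne.symm hua), lt_of_le_of_ne hu.2 hub⟩
      have hopen : IsOpen ({s : ℝ≥0 | |M s ω| < ((n : ℝ) + 1)⁻¹} ∩ Ioo a b) :=
        hV.inter isOpen_Ioo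
      obtain ⟨q, hqD, hq⟩ := hDd.exists_mem_open hopen ⟨u, huV, hu_mem⟩
      exact ⟨q, ⟨mem_insert_of_mem _ (mem_insert_of_mem _ hqD),
        Ioo_subset_Icc_self hq.2⟩, hq.1⟩
    · intro h
      choose q hq hq' using h
      obtain ⟨u, hu, φ, hφ, hφq⟩ := isCompact_Icc.tendsto_subseq (fun n => (hq n).2)
      refine ⟨u, hu, ?_⟩
      have h1 : Tendsto (fun k => M (q (φ k)) ω) atTop (𝓝 (M u ω)) :=
        ((hcont ω).tendsto u).comp hφq
      have h2 : Tendsto (fun k => |M (q (φ k)) ω|) atTop (𝓝 0) := by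
        refine squeeze_zero (fun k => abs_nonneg _) (fun k => ?_)
          tendsto_one_div_add_atTop_nhds_zero_nat
        refine (hq' (φ k)).le.trans ?_
        rw [one_div, inv_le_inv₀ (by positivity) (by positivity)]
        exact_mod_cast Nat.succ_le_succ hφ.le_apply
      have := tendsto_nhds_unique (h1.abs) h2
      exact abs_eq_zero.mp this
  rw [hkey]
  refine MeasurableSet.iInter fun n => MeasurableSet.biUnion hSc fun q hq => ?_
  have hqb : q ≤ b := hq.2.2
  have hmq : StronglyMeasurable[𝓕 b] (M q) := (hadp q).mono (𝓕.mono hqb)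
  have hmq2 := @StronglyMeasurable.measurable Ω ℝ (M q) (𝓕 b) _ _ _ _ hmq
  exact hmq2 ((isOpen_lt continuous_abs continuous_const).measurableSet)



/-- dyadic grid point over `[r, r+n]` with mesh `2⁻ⁿ`. -/
noncomputable def vg (r : ℝ≥0) (n k : ℕ) : ℝ≥0 :=
  r + (min k (n * 2 ^ n) : ℕ) * ((2 : ℝ≥0) ^ n)⁻¹

lemma vg_mono (r : ℝ≥0) (n : ℕ) : Monotone (vg r n) := fun i j hij => by
  unfold vg
  exact add_le_add_right
    (mul_le_mul_left (show (((min i (n * 2 ^ n) : ℕ)) : ℝ≥0) ≤ ((min j (n * 2 ^ n) : ℕ) : ℝ≥0) by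
      exact_mod_cast min_le_min hij le_rfl) _) r

lemma two_pow_ne (n : ℕ) : ((2:ℝ≥0)^n) ≠ 0 := by positivity

lemma vg_last (r : ℝ≥0) (n : ℕ) : vg r n (n * 2 ^ n) = r + n := by
  unfold vg
  rw [min_self]
  congr 1
  push_cast
  rw [mul_assoc, mul_inv_cancel₀ (two_pow_ne n), mul_one]

lemma vg_zero (r : ℝ≥0) (n : ℕ) : vg r n 0 = r := by simp [vg]

lemma vg_ge (r : ℝ≥0) (n k : ℕ) : r ≤ vg r n k := le_add_right le_rfl

/-- approximate hitting index of `0` after time `r`. -/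
noncomputable def tauN (M : ℝ≥0 → Ω → ℝ) (r : ℝ≥0) (n : ℕ) (ω : Ω) : ℕ :=
  sInf ({k | ∃ u ∈ Icc r (vg r n k), M u ω = 0} ∪ {n * 2 ^ n})

lemma tauN_le (M : ℝ≥0 → Ω → ℝ) (r : ℝ≥0) (n : ℕ) (ω : Ω) :
    tauN M r n ω ≤ n * 2 ^ n :=
  Nat.sInf_le (Or.inr rfl)

/-- the filtration along the grid. -/
noncomputable def gfilt (𝓕 : Filtration ℝ≥0 m) (r : ℝ≥0) (n : ℕ) : Filtration ℕ m where
  seq := fun k => 𝓕 (vg r n k)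
  mono' := fun i j hij => 𝓕.mono (vg_mono r n hij)
  le' := fun k => 𝓕.le _

lemma isStoppingTime_tauN (𝓕 : Filtration ℝ≥0 m) (M : ℝ≥0 → Ω → ℝ)
    (hadp : ∀ i, StronglyMeasurable[𝓕 i] (M i))
    (hcont : ∀ ω, Continuous fun t => M t ω) (r : ℝ≥0) (n : ℕ) :
    IsStoppingTime (gfilt 𝓕 r n) (fun ω => (WithTop.some (tauN M r n ω) : WithTop ℕ)) := by
  intro j
  simp only [WithTop.coe_le_coe]
  rcases le_or_gt (n * 2 ^ n) j with hj | hj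
  · have : {ω | tauN M r n ω ≤ j} = univ :=
      eq_univ_of_forall fun ω => (tauN_le M r n ω).trans hj
    rw [this]
    exact MeasurableSet.univ
  · have hset : {ω | tauN M r n ω ≤ j} = {ω | ∃ u ∈ Icc r (vg r n j), M u ω = 0} := by
      ext ω
      simp only [mem_setOf_eq]
      constructor
      · intro hle
        have hmem := Nat.sInf_mem (⟨n * 2 ^ n, Or.inr rfl⟩ :
          ({k | ∃ u ∈ Icc r (vg r n k), M u ω = 0} ∪ {n * 2 ^ n}).Nonempty)
        rcases hmem with hmem | hmem
        · obtain ⟨u, hu, hu0⟩ := hmem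
          exact ⟨u, ⟨hu.1, hu.2.trans (vg_mono r n hle)⟩, hu0⟩
        · exfalso
          simp only [Set.mem_singleton_iff] at hmem
          rw [tauN] at hle
          omega
      · intro h
        exact Nat.sInf_le (Or.inl h)
    rw [hset]
    exact measurableSet_hasZero 𝓕 M hadp hcont r (vg r n j)

lemma tauN_of_noZero {M : ℝ≥0 → Ω → ℝ} {r : ℝ≥0} {ω : Ω}
    (hno : ∀ u, r ≤ u → M u ω ≠ 0) (n : ℕ) : tauN M r n ω = n * 2 ^ n := by
  unfold tauN
  have : {k | ∃ u ∈ Icc r (vg r n k), M u ω = 0} = ∅ := by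
    ext k
    simp only [mem_setOf_eq, mem_empty_iff_false, iff_false, not_exists]
    rintro u ⟨hu1, hu0⟩
    exact hno u hu1.1 hu0
  rw [this, Set.empty_union]
  exact csInf_singleton _

/-- convergence to the terminal value when there is no zero after `r`. -/
lemma tendsto_stopped_of_noZero {M : ℝ≥0 → Ω → ℝ} {r : ℝ≥0} {ω : Ω} {c : ℝ}
    (hlim : Tendsto (fun u => M u ω) atTop (𝓝 c))
    (hno : ∀ u, r ≤ u → M u ω ≠ 0) :
    Tendsto (fun n => M (vg r n (tauN M r n ω)) ω) atTop (𝓝 c) := by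
  have h1 : ∀ n : ℕ, M (vg r n (tauN M r n ω)) ω = M (r + (n : ℝ≥0)) ω := fun n => by
    rw [tauN_of_noZero hno, vg_last]
  rw [show (fun n : ℕ => M (vg r n (tauN M r n ω)) ω)
      = fun n : ℕ => M (r + (n : ℝ≥0)) ω from funext h1]
  refine hlim.comp (tendsto_atTop_mono (fun n : ℕ => self_le_add_left _ r) ?_)
  exact tendsto_natCast_atTop_atTop

/-- convergence to `0` when there is a zero after `r`. -/
lemma tendsto_stopped_of_zero {M : ℝ≥0 → Ω → ℝ} {r : ℝ≥0} {ω : Ω}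
    (hcont : Continuous fun t => M t ω)
    (hz : ∃ u, r ≤ u ∧ M u ω = 0) :
    Tendsto (fun n => M (vg r n (tauN M r n ω)) ω) atTop (𝓝 0) := by
  classical
  set f : ℝ≥0 → ℝ := fun u => M u ω with hf
  set Z : Set ℝ≥0 := {u | r ≤ u ∧ f u = 0} with hZ
  have hZc : IsClosed Z := by
    have h0 : Z = Ici r ∩ f ⁻¹' {0} := by ext u; simp [hZ, mem_setOf_eq]
    rw [h0]
    exact isClosed_Ici.inter (isClosed_singleton.preimage hcont)
  have hZne : Z.Nonempty := ⟨hz.choose, hz.choose_spec⟩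
  set d : ℝ≥0 := sInf Z with hd
  have hdZ : d ∈ Z := hZc.csInf_mem hZne (OrderBot.bddBelow Z)
  have hrd : r ≤ d := hdZ.1
  have hd0 : f d = 0 := hdZ.2
  -- key sandwich
  have key : ∀ n : ℕ, d ≤ r + n →
      d ≤ vg r n (tauN M r n ω) ∧ vg r n (tauN M r n ω) ≤ d + ((2:ℝ≥0) ^ n)⁻¹ := by
    intro n hn
    set K := n * 2 ^ n with hK
    set ks := ⌈((d - r) * 2 ^ n : ℝ≥0)⌉₊ with hks
    have hle_ks : ((d - r) * 2 ^ n : ℝ≥0) ≤ ks := Nat.le_ceil _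
    have hks_le : (ks : ℝ≥0) ≤ (d - r) * 2 ^ n + 1 := (Nat.ceil_lt_add_one zero_le).le
    have hdrn : (d - r : ℝ≥0) ≤ n := tsub_le_iff_right.2 (by rwa [add_comm])
    have hksK : ks ≤ K := by
      rw [hks, Nat.ceil_le]
      calc ((d - r) * 2 ^ n : ℝ≥0) ≤ (n : ℝ≥0) * 2 ^ n := by gcongr
        _ = ((K : ℕ) : ℝ≥0) := by rw [hK]; push_cast; ring
    have hvg_ks : vg r n ks = r + (ks : ℝ≥0) * ((2:ℝ≥0) ^ n)⁻¹ := by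
      unfold vg; rw [min_eq_left hksK]
    have hd_le_vgks : d ≤ vg r n ks := by
      rw [hvg_ks]
      have h1 : (d - r : ℝ≥0) ≤ (ks : ℝ≥0) * ((2:ℝ≥0) ^ n)⁻¹ := by
        have := mul_le_mul_left hle_ks (((2:ℝ≥0) ^ n)⁻¹)
        rwa [mul_assoc, mul_inv_cancel₀ (two_pow_ne n), mul_one] at this
      calc d = r + (d - r) := (add_tsub_cancel_of_le hrd).symm
        _ ≤ r + (ks : ℝ≥0) * ((2:ℝ≥0) ^ n)⁻¹ := by gcongr
    have hmem_ks : ks ∈ {k | ∃ u ∈ Icc r (vg r n k), M u ω = 0} :=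
      ⟨d, ⟨hrd, hd_le_vgks⟩, hd0⟩
    have htau_le_ks : tauN M r n ω ≤ ks := Nat.sInf_le (Or.inl hmem_ks)
    have htau_zero : ∃ u ∈ Icc r (vg r n (tauN M r n ω)), M u ω = 0 := by
      have hmem := Nat.sInf_mem (⟨K, Or.inr rfl⟩ :
        ({k | ∃ u ∈ Icc r (vg r n k), M u ω = 0} ∪ {K}).Nonempty)
      rcases hmem with hmem | hmem
      · exact hmem
      · simp only [Set.mem_singleton_iff] at hmem
        have h2 : tauN M r n ω = K := hmem
        have h3 : ks = tauN M r n ω := le_antisymm (h2 ▸ hksK) htau_le_ks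
        rw [← h3]
        exact hmem_ks
    constructor
    · obtain ⟨u, hu, hu0⟩ := htau_zero
      exact le_trans (csInf_le (OrderBot.bddBelow Z) ⟨hu.1, hu0⟩) hu.2
    · calc vg r n (tauN M r n ω) ≤ vg r n ks := vg_mono r n htau_le_ks
        _ ≤ r + ((d - r) * 2 ^ n + 1) * ((2:ℝ≥0) ^ n)⁻¹ := by rw [hvg_ks]; gcongr
        _ = r + ((d - r) + ((2:ℝ≥0) ^ n)⁻¹) := by
            rw [add_mul, one_mul, mul_assoc, mul_inv_cancel₀ (two_pow_ne n), mul_one]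
        _ = d + ((2:ℝ≥0) ^ n)⁻¹ := by rw [← add_assoc, add_tsub_cancel_of_le hrd]
  -- squeeze
  have hvt : Tendsto (fun n => vg r n (tauN M r n ω)) atTop (𝓝 d) := by
    have hup : Tendsto (fun n : ℕ => d + ((2:ℝ≥0) ^ n)⁻¹) atTop (𝓝 d) := by
      have h2 : Tendsto (fun n : ℕ => ((2:ℝ≥0) ^ n)⁻¹) atTop (𝓝 0) := by
        simp_rw [← inv_pow]
        exact NNReal.tendsto_pow_atTop_nhds_zero_of_lt_one
          (by rw [← NNReal.coe_lt_coe]; norm_num)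
      simpa using (tendsto_const_nhds.add h2)
    have hev : ∀ᶠ n : ℕ in atTop, d ≤ r + n := by
      filter_upwards [eventually_ge_atTop ⌈(d - r : ℝ≥0)⌉₊] with n hn
      have h1 : (d - r : ℝ≥0) ≤ n := (Nat.le_ceil _).trans (by exact_mod_cast hn)
      calc d = r + (d - r) := (add_tsub_cancel_of_le hrd).symm
        _ ≤ r + n := by gcongr
    refine tendsto_of_tendsto_of_tendsto_of_le_of_le' tendsto_const_nhds hup ?_ ?_
    · filter_upwards [hev] with n hn
      exact (key n hn).1
    · filter_upwards [hev] with n hn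
      exact (key n hn).2
  have := ((hcont.tendsto d).comp hvt)
  rw [hd0] at this
  exact this


lemma stopped_eq_condexp (𝓕 : Filtration ℝ≥0 m) (M : ℝ≥0 → Ω → ℝ) {μ : Measure Ω}
    [IsProbabilityMeasure μ]
    (hM : Martingale M 𝓕 μ) (hcont : ∀ ω, Continuous fun t => M t ω)
    (Minf : Ω → ℝ) (hMinf_int : Integrable Minf μ)
    (hterm : ∀ t : ℝ≥0, M t =ᵐ[μ] μ[Minf | 𝓕 t]) (r : ℝ≥0) (n : ℕ) :
    ∃ G : MeasurableSpace Ω, G ≤ m ∧ 𝓕 r ≤ G ∧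
      (fun ω => M (vg r n (tauN M r n ω)) ω) =ᵐ[μ] μ[Minf | G] := by
  set 𝒢 := gfilt 𝓕 r n with h𝒢
  have hτ : IsStoppingTime 𝒢 (fun ω => (WithTop.some (tauN M r n ω) : WithTop ℕ)) := isStoppingTime_tauN 𝓕 M hM.stronglyAdapted hcont r n
  set Y : ℕ → Ω → ℝ := fun k => M (vg r n k) with hYdef
  have hY : Martingale Y 𝒢 μ :=
    ⟨fun k => hM.stronglyAdapted _, fun i j hij => hM.2 _ _ (vg_mono r n hij)⟩
  have hτle : ∀ ω, (WithTop.some (tauN M r n ω) : WithTop ℕ) ≤ (WithTop.some (n * 2 ^ n) : WithTop ℕ) :=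
    fun ω => WithTop.coe_le_coe.2 (tauN_le M r n ω)
  set G := hτ.measurableSpace with hG
  have hGm : G ≤ m := hτ.measurableSpace_le_of_le hτle
  have h1 : (fun ω => M (vg r n (tauN M r n ω)) ω) =ᵐ[μ] μ[Y (n * 2 ^ n) | G] := by
    have h1' := hY.stoppedValue_ae_eq_condExp_of_le_const hτ hτle
    have hsv : stoppedValue Y (fun ω => (WithTop.some (tauN M r n ω) : WithTop ℕ))
        = fun ω => M (vg r n (tauN M r n ω)) ω := by
      funext ω; rfl
    rwa [hsv] at h1'
  have hG_le : G ≤ 𝓕 (r + n) := by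
    have h := hτ.measurableSpace_le_of_le_const (i := n * 2 ^ n) hτle
    have : 𝒢 (n * 2 ^ n) = 𝓕 (r + n) := by
      show 𝓕 (vg r n (n * 2 ^ n)) = 𝓕 (r + n)
      rw [vg_last]
    rwa [this] at h
  have h𝓕r_le : 𝓕 r ≤ G := by
    have h := hτ.le_measurableSpace_of_const_le (i := 0) (fun ω => WithTop.coe_le_coe.2 (Nat.zero_le _))
    have : 𝒢 0 = 𝓕 r := by show 𝓕 (vg r n 0) = 𝓕 r; rw [vg_zero]
    rwa [this] at h
  have hYK : Y (n * 2 ^ n) =ᵐ[μ] μ[Minf | 𝓕 (r + n)] := by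
    have : Y (n * 2 ^ n) = M (r + n) := by rw [hYdef]; simp [vg_last]
    rw [this]
    exact hterm _
  have h2 : μ[Y (n * 2 ^ n) | G] =ᵐ[μ] μ[Minf | G] :=
    (condExp_congr_ae hYK).trans (condExp_condExp_of_le hG_le (𝓕.le (r + n)))
  exact ⟨G, hGm, h𝓕r_le, h1.trans h2⟩

lemma measurableSet_noZero (𝓕 : Filtration ℝ≥0 m) (M : ℝ≥0 → Ω → ℝ)
    (hadp : ∀ i, StronglyMeasurable[𝓕 i] (M i))
    (hcont : ∀ ω, Continuous fun t => M t ω) (r : ℝ≥0) :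
    MeasurableSet {ω | ∀ u, r ≤ u → M u ω ≠ 0} := by
  have hkey : {ω | ∀ u, r ≤ u → M u ω ≠ 0}
      = (⋃ n : ℕ, {ω | ∃ u ∈ Icc r (r + (n : ℝ≥0)), M u ω = 0})ᶜ := by
    ext ω
    constructor
    · intro h hmem
      simp only [mem_iUnion, mem_setOf_eq] at hmem
      obtain ⟨n, u, hu, hu0⟩ := hmem
      exact h u hu.1 hu0
    · intro h u hru hu0
      obtain ⟨n, hn⟩ := exists_nat_ge (u - r)
      have hun : u ≤ r + (n : ℝ≥0) := by
        calc u = r + (u - r) := (add_tsub_cancel_of_le hru).symm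
          _ ≤ r + (n : ℝ≥0) := by gcongr
      exact h (mem_iUnion.2 ⟨n, ⟨u, ⟨hru, hun⟩, hu0⟩⟩)
  rw [hkey]
  exact (MeasurableSet.iUnion (fun n : ℕ =>
    (𝓕.le _) _ (measurableSet_hasZero 𝓕 M hadp hcont r (r + (n : ℝ≥0))))).compl

lemma main_setIntegral (𝓕 : Filtration ℝ≥0 m) (M : ℝ≥0 → Ω → ℝ) {μ : Measure Ω}
    [IsProbabilityMeasure μ]
    (hM : Martingale M 𝓕 μ) (hcont : ∀ ω, Continuous fun t => M t ω)
    (Minf : Ω → ℝ) (hMinf_int : Integrable Minf μ)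
    (hterm : ∀ t : ℝ≥0, M t =ᵐ[μ] μ[Minf | 𝓕 t])
    (hconv : ∀ᵐ ω ∂μ, Tendsto (fun t => M t ω) atTop (𝓝 (Minf ω)))
    (r : ℝ≥0) {B : Set Ω} (hB : MeasurableSet[𝓕 r] B) :
    ∫ ω in B, ({ω' | ∀ u, r ≤ u → M u ω' ≠ 0}.indicator (fun ω' => |Minf ω'|)) ω ∂μ
      = ∫ ω in B, |M r ω| ∂μ := by
  set NZ : Set Ω := {ω' | ∀ u, r ≤ u → M u ω' ≠ 0} with hNZdef
  have hNZmeas : MeasurableSet NZ := measurableSet_noZero 𝓕 M hM.stronglyAdapted hcont r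
  set X : ℕ → Ω → ℝ := fun n ω => M (vg r n (tauN M r n ω)) ω with hXdef
  choose G hGm hGr hXrep using fun n : ℕ =>
    stopped_eq_condexp 𝓕 M hM hcont Minf hMinf_int hterm r n
  set L : Ω → ℝ := NZ.indicator Minf with hLdef
  have hLint : Integrable L μ := hMinf_int.indicator hNZmeas
  have hXint : ∀ n, Integrable (X n) μ := fun n => integrable_condExp.congr (hXrep n).symm
  have hXmeas : ∀ n, AEStronglyMeasurable (X n) μ := fun n =>
    (stronglyMeasurable_condExp.mono (hGm n)).aestronglyMeasurable.congr (hXrep n).symm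
  have hUI : UnifIntegrable X 1 μ :=
    ((hMinf_int.uniformIntegrable_condExp hGm).2.1).ae_eq fun n => (hXrep n).symm
  have hXL : ∀ᵐ ω ∂μ, Tendsto (fun n => X n ω) atTop (𝓝 (L ω)) := by
    filter_upwards [hconv] with ω hω
    by_cases hno : ∀ u, r ≤ u → M u ω ≠ 0
    · have h1 := tendsto_stopped_of_noZero hω hno
      have h2 : L ω = Minf ω := indicator_of_mem (show ω ∈ NZ from hno) _
      rw [h2]; exact h1
    · have hz : ∃ u, r ≤ u ∧ M u ω = 0 := by
        push_neg at hno
        exact hno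
      have h1 := tendsto_stopped_of_zero (hcont ω) hz
      have h2 : L ω = 0 := indicator_of_notMem (show ω ∉ NZ from hno) _
      rw [h2]; exact h1
  have hLp : Tendsto (fun n => eLpNorm (X n - L) 1 μ) atTop (𝓝 0) :=
    tendsto_Lp_finite_of_tendsto_ae le_rfl ENNReal.one_ne_top hXmeas
      (memLp_one_iff_integrable.2 hLint) hUI hXL
  -- the set-integral identity for L
  have hBL : ∀ C : Set Ω, MeasurableSet[𝓕 r] C →
      ∫ ω in C, L ω ∂μ = ∫ ω in C, M r ω ∂μ := by
    intro C hC
    have hCm : MeasurableSet C := (𝓕.le r) _ hC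
    have hXB : ∀ n, ∫ ω in C, X n ω ∂μ = ∫ ω in C, M r ω ∂μ := by
      intro n
      calc ∫ ω in C, X n ω ∂μ = ∫ ω in C, (μ[Minf | G n]) ω ∂μ :=
            integral_congr_ae (ae_restrict_of_ae (hXrep n))
        _ = ∫ ω in C, Minf ω ∂μ := setIntegral_condExp (hGm n) hMinf_int (hGr n _ hC)
        _ = ∫ ω in C, (μ[Minf | 𝓕 r]) ω ∂μ := (setIntegral_condExp (𝓕.le r) hMinf_int hC).symm
        _ = ∫ ω in C, M r ω ∂μ := integral_congr_ae (ae_restrict_of_ae (hterm r).symm)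
    have hlim1 : Tendsto (fun n => ∫ ω in C, X n ω ∂μ) atTop (𝓝 (∫ ω in C, L ω ∂μ)) := by
      refine tendsto_integral_of_L1 L hLint.restrict.aestronglyMeasurable
        (Eventually.of_forall fun n => (hXint n).restrict) ?_
      have hbound : ∀ n, (∫⁻ ω in C, ‖X n ω - L ω‖ₑ ∂μ) ≤ eLpNorm (X n - L) 1 μ := by
        intro n
        rw [eLpNorm_one_eq_lintegral_enorm]
        exact setLIntegral_le_lintegral _ _
      exact tendsto_of_tendsto_of_tendsto_of_le_of_le tendsto_const_nhds hLp
        (fun n => zero_le) hbound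
    have hlim2 : Tendsto (fun n => ∫ ω in C, X n ω ∂μ) atTop (𝓝 (∫ ω in C, M r ω ∂μ)) := by
      simp_rw [hXB]; exact tendsto_const_nhds
    exact tendsto_nhds_unique hlim1 hlim2
  -- sign analysis
  have hsm : StronglyMeasurable[𝓕 r] (M r) := hM.stronglyAdapted r
  have hmr := @StronglyMeasurable.measurable Ω ℝ (M r) (𝓕 r) _ _ _ _ hsm
  set Bp := B ∩ {ω | 0 < M r ω} with hBp
  set Bn := B ∩ {ω | M r ω < 0} with hBn
  set B0 := B ∩ {ω | M r ω = 0} with hB0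
  have hBpM : MeasurableSet[𝓕 r] Bp := hB.inter (hmr measurableSet_Ioi)
  have hBnM : MeasurableSet[𝓕 r] Bn := hB.inter (hmr measurableSet_Iio)
  have hB0M : MeasurableSet[𝓕 r] B0 := hB.inter (hmr (measurableSet_singleton 0))
  have hsign : ∀ ω, Tendsto (fun t => M t ω) atTop (𝓝 (Minf ω)) →
      (∀ u, r ≤ u → M u ω ≠ 0) →
      ((0 < M r ω → 0 ≤ Minf ω) ∧ (M r ω < 0 → Minf ω ≤ 0)) := by
    intro ω hω hno
    constructor
    · intro h0
      have hpos : ∀ u, r ≤ u → 0 < M u ω := by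
        intro u hu
        rcases lt_trichotomy (M u ω) 0 with h | h | h
        · exfalso
          obtain ⟨z, hz, hz0⟩ := intermediate_value_Icc' hu
            ((hcont ω).continuousOn) ⟨h.le, h0.le⟩
          exact hno z hz.1 hz0
        · exact absurd h (hno u hu)
        · exact h
      exact ge_of_tendsto hω (eventually_atTop.2 ⟨r, fun u hu => (hpos u hu).le⟩)
    · intro h0
      have hneg : ∀ u, r ≤ u → M u ω < 0 := by
        intro u hu
        rcases lt_trichotomy (M u ω) 0 with h | h | h
        · exact h
        · exact absurd h (hno u hu)
        · exfalso
          obtain ⟨z, hz, hz0⟩ := intermediate_value_Icc hu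
            ((hcont ω).continuousOn) ⟨h0.le, h.le⟩
          exact hno z hz.1 hz0
      exact le_of_tendsto hω (eventually_atTop.2 ⟨r, fun u hu => (hneg u hu).le⟩)
  set F : Ω → ℝ := NZ.indicator (fun ω' => |Minf ω'|) with hFdef
  have hFint : Integrable F μ := hMinf_int.abs.indicator hNZmeas
  -- on Bp
  have hIp : ∫ ω in Bp, F ω ∂μ = ∫ ω in Bp, |M r ω| ∂μ := by
    have h1 : ∀ᵐ ω ∂(μ.restrict Bp), F ω = L ω := by
      rw [ae_restrict_iff' ((𝓕.le r) _ hBpM)]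
      filter_upwards [hconv] with ω hω hmem
      by_cases hNZ : ω ∈ NZ
      · rw [hFdef, hLdef, indicator_of_mem hNZ, indicator_of_mem hNZ,
          abs_of_nonneg ((hsign ω hω hNZ).1 hmem.2)]
      · rw [hFdef, hLdef, indicator_of_notMem hNZ, indicator_of_notMem hNZ]
    calc ∫ ω in Bp, F ω ∂μ = ∫ ω in Bp, L ω ∂μ := integral_congr_ae h1
      _ = ∫ ω in Bp, M r ω ∂μ := hBL Bp hBpM
      _ = ∫ ω in Bp, |M r ω| ∂μ := by
          refine setIntegral_congr_fun ((𝓕.le r) _ hBpM) fun ω hω => ?_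
          exact (abs_of_pos hω.2).symm
  -- on Bn
  have hIn : ∫ ω in Bn, F ω ∂μ = ∫ ω in Bn, |M r ω| ∂μ := by
    have h1 : ∀ᵐ ω ∂(μ.restrict Bn), F ω = -L ω := by
      rw [ae_restrict_iff' ((𝓕.le r) _ hBnM)]
      filter_upwards [hconv] with ω hω hmem
      by_cases hNZ : ω ∈ NZ
      · rw [hFdef, hLdef, indicator_of_mem hNZ, indicator_of_mem hNZ,
          abs_of_nonpos ((hsign ω hω hNZ).2 hmem.2)]
      · rw [hFdef, hLdef, indicator_of_notMem hNZ, indicator_of_notMem hNZ, neg_zero]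
    calc ∫ ω in Bn, F ω ∂μ = ∫ ω in Bn, -L ω ∂μ := integral_congr_ae h1
      _ = -∫ ω in Bn, L ω ∂μ := integral_neg _
      _ = -∫ ω in Bn, M r ω ∂μ := by rw [hBL Bn hBnM]
      _ = ∫ ω in Bn, -M r ω ∂μ := (integral_neg _).symm
      _ = ∫ ω in Bn, |M r ω| ∂μ := by
          refine setIntegral_congr_fun ((𝓕.le r) _ hBnM) fun ω hω => ?_
          exact (abs_of_neg hω.2).symm
  -- on B0
  have hI0 : ∫ ω in B0, F ω ∂μ = ∫ ω in B0, |M r ω| ∂μ := by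
    have h1 : ∫ ω in B0, F ω ∂μ = ∫ ω in B0, (0:ℝ) ∂μ := by
      refine setIntegral_congr_fun ((𝓕.le r) _ hB0M) fun ω hω => ?_
      have hNZ : ω ∉ NZ := fun h => h r le_rfl hω.2
      rw [hFdef, indicator_of_notMem hNZ]
    have h2 : ∫ ω in B0, |M r ω| ∂μ = ∫ ω in B0, (0:ℝ) ∂μ := by
      refine setIntegral_congr_fun ((𝓕.le r) _ hB0M) fun ω hω => ?_
      rw [hω.2, abs_zero]
    rw [h1, h2]
  -- combine
  have hsplit : B = (Bp ∪ Bn) ∪ B0 := by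
    ext ω
    simp only [hBp, hBn, hB0, mem_union, mem_inter_iff, mem_setOf_eq]
    constructor
    · intro hω
      rcases lt_trichotomy (M r ω) 0 with h | h | h
      · exact Or.inl (Or.inr ⟨hω, h⟩)
      · exact Or.inr ⟨hω, h⟩
      · exact Or.inl (Or.inl ⟨hω, h⟩)
    · rintro ((⟨h, -⟩ | ⟨h, -⟩) | ⟨h, -⟩) <;> exact h
  have hd1 : Disjoint Bp Bn := by
    rw [Set.disjoint_left]
    rintro ω ⟨-, h1⟩ ⟨-, h2⟩
    simp only [mem_setOf_eq] at h1 h2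
    exact lt_asymm h1 h2
  have hd2 : Disjoint (Bp ∪ Bn) B0 := by
    rw [Set.disjoint_left]
    rintro ω (⟨-, h1⟩ | ⟨-, h1⟩) ⟨-, h2⟩ <;>
      · simp only [mem_setOf_eq] at h1 h2
        rw [h2] at h1
        exact lt_irrefl 0 h1
  have hBnMm : MeasurableSet Bn := (𝓕.le r) _ hBnM
  have hB0Mm : MeasurableSet B0 := (𝓕.le r) _ hB0M
  have habs_int : Integrable (fun ω => |M r ω|) μ := (hM.integrable r).abs
  rw [hsplit, setIntegral_union hd2 hB0Mm (hFint.integrableOn) (hFint.integrableOn),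
    setIntegral_union hd1 hBnMm (hFint.integrableOn) (hFint.integrableOn),
    setIntegral_union hd2 hB0Mm (habs_int.integrableOn) (habs_int.integrableOn),
    setIntegral_union hd1 hBnMm (habs_int.integrableOn) (habs_int.integrableOn),
    hIp, hIn, hI0]

end Stmt1Aux

open Stmt1Aux

/-- for a continuous uniformly integrable martingale `M` with terminal value
`M∞` and `g = sup {t : M t = 0}`, one has a.s. `|M t| = E[|M∞| 1_{g ≤ t} | 𝓕 t]`. -/
theorem stmt_1 {Ω : Type*} {m : MeasurableSpace Ω} {μ : Measure Ω} [IsProbabilityMeasure μ]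
    (𝓕 : Filtration ℝ≥0 m) (M : ℝ≥0 → Ω → ℝ)
    (hM : Martingale M 𝓕 μ)
    (hcont : ∀ ω, Continuous fun t => M t ω)
    (hui : UniformIntegrable M 1 μ)
    (Minf : Ω → ℝ) (hMinf_int : Integrable Minf μ)
    (hterm : ∀ t : ℝ≥0, M t =ᵐ[μ] μ[Minf | 𝓕 t])
    (hconv : ∀ᵐ ω ∂μ, Tendsto (fun t => M t ω) atTop (𝓝 (Minf ω)))
    (g : Ω → ℝ≥0∞)
    (hg : ∀ ω, g ω = sSup ((fun s : ℝ≥0 => (s : ℝ≥0∞)) '' {s | M s ω = 0}))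
    (t : ℝ≥0) :
    (fun ω => |M t ω|)
      =ᵐ[μ] μ[fun ω =>
        |Minf ω| * Set.indicator {ω' | g ω' ≤ (t : ℝ≥0∞)} (fun _ => (1 : ℝ)) ω | 𝓕 t] := by
  classical
  set Gt : Set Ω := {ω' | g ω' ≤ (t : ℝ≥0∞)} with hGtdef
  set NZt : Set Ω := {ω' | ∀ u, t ≤ u → M u ω' ≠ 0} with hNZtdef
  -- characterization of {g ≤ t}
  have hGset : ∀ ω, ω ∈ Gt ↔ ∀ s : ℝ≥0, M s ω = 0 → s ≤ t := by
    intro ω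
    rw [hGtdef, mem_setOf_eq, hg ω]
    constructor
    · intro h s hs0
      have h1 : (s : ℝ≥0∞) ≤ sSup ((fun s : ℝ≥0 => (s : ℝ≥0∞)) '' {s | M s ω = 0}) :=
        le_sSup ⟨s, hs0, rfl⟩
      exact_mod_cast h1.trans h
    · intro h
      refine sSup_le ?_
      rintro x ⟨s, hs, rfl⟩
      exact ENNReal.coe_le_coe.2 (h s hs)
  -- measurability of Gt
  have hGt_meas : MeasurableSet Gt := by
    have hkey : Gt = ⋂ n : ℕ,
        {ω | ∃ u ∈ Icc (t + ((n : ℝ≥0) + 1)⁻¹) (t + (n : ℝ≥0)), M u ω = 0}ᶜ := by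
      ext ω
      rw [hGset ω]
      simp only [mem_iInter, mem_compl_iff, mem_setOf_eq]
      constructor
      · intro h n hex
        obtain ⟨u, hu, hu0⟩ := hex
        have h1 : u ≤ t := h u hu0
        have h2 : t + ((n : ℝ≥0) + 1)⁻¹ ≤ t := hu.1.trans h1
        have h3 : (0 : ℝ≥0) < ((n : ℝ≥0) + 1)⁻¹ := by positivity
        exact (lt_add_of_pos_right t h3).not_ge h2
      · intro h s hs0
        by_contra hst
        push_neg at hst
        have hts : t ≤ s := hst.le
        obtain ⟨n1, hn1⟩ := exists_nat_ge ((s - t)⁻¹)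
        obtain ⟨n2, hn2⟩ := exists_nat_ge (s - t)
        set n := max n1 n2 with hn
        have hpos : (0 : ℝ≥0) < s - t := tsub_pos_of_lt hst
        have ha : t + ((n : ℝ≥0) + 1)⁻¹ ≤ s := by
          have h1 : ((s - t)⁻¹ : ℝ≥0) ≤ (n : ℝ≥0) + 1 := by
            refine hn1.trans ?_
            calc ((n1 : ℝ≥0)) ≤ (n : ℝ≥0) := by exact_mod_cast le_max_left n1 n2
              _ ≤ (n : ℝ≥0) + 1 := le_self_add
          have h2 : ((n : ℝ≥0) + 1)⁻¹ ≤ s - t := by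
            rw [← inv_inv (s - t : ℝ≥0)]
            exact inv_anti₀ (by positivity) h1
          calc t + ((n : ℝ≥0) + 1)⁻¹ ≤ t + (s - t) := by gcongr
            _ = s := add_tsub_cancel_of_le hts
        have hb : s ≤ t + (n : ℝ≥0) := by
          have h1 : (s - t : ℝ≥0) ≤ n := hn2.trans (by exact_mod_cast le_max_right n1 n2)
          calc s = t + (s - t) := (add_tsub_cancel_of_le hts).symm
            _ ≤ t + (n : ℝ≥0) := by gcongr
        exact h n ⟨s, ⟨⟨ha, hb⟩, hs0⟩⟩
    rw [hkey]
    exact MeasurableSet.iInter fun n =>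
      ((𝓕.le _) _ (measurableSet_hasZero 𝓕 M hM.stronglyAdapted hcont _ _)).compl
  have hNZt_meas : MeasurableSet NZt := measurableSet_noZero 𝓕 M hM.stronglyAdapted hcont t
  have hNZt_sub : NZt ⊆ Gt := by
    intro ω hω
    rw [hGset ω]
    intro s hs0
    by_contra hst
    push_neg at hst
    exact hω s hst.le hs0
  -- the null set A = Gt \ NZt
  set A : Set Ω := Gt \ NZt with hAdef
  set S : Set Ω := {ω | M t ω = 0} with hSdef
  have hsmt : StronglyMeasurable[𝓕 t] (M t) := hM.stronglyAdapted t
  have hmrt := @StronglyMeasurable.measurable Ω ℝ (M t) (𝓕 t) _ _ _ _ hsmt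
  have hSmeas : MeasurableSet[𝓕 t] S := hmrt (measurableSet_singleton 0)
  set q : ℕ → ℝ≥0 := fun n => t + ((n : ℝ≥0) + 1)⁻¹ with hqdef
  have htq : ∀ n, t ≤ q n := fun n => le_add_right le_rfl
  have htq' : ∀ n, t < q n := fun n => lt_add_of_pos_right t (by positivity)
  set NZq : ℕ → Set Ω := fun n => {ω' | ∀ u, q n ≤ u → M u ω' ≠ 0} with hNZqdef
  have hNZq_meas : ∀ n, MeasurableSet (NZq n) := fun n =>
    measurableSet_noZero 𝓕 M hM.stronglyAdapted hcont (q n)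
  -- A ⊆ S ∩ NZq n pointwise
  have hA_sub : ∀ n, A ⊆ S ∩ NZq n := by
    intro n ω hω
    have hGtm : ∀ s : ℝ≥0, M s ω = 0 → s ≤ t := (hGset ω).1 hω.1
    have hz : ∃ u, t ≤ u ∧ M u ω = 0 := by
      by_contra hc
      push_neg at hc
      exact hω.2 (fun u hu h0 => hc u hu h0)
    obtain ⟨u, hu, hu0⟩ := hz
    have hut : u = t := le_antisymm (hGtm u hu0) hu
    constructor
    · rw [hSdef, mem_setOf_eq, ← hut]
      exact hu0
    · intro v hv h0
      exact ((htq' n).trans_le (le_trans hv (hGtm v h0))).false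
  -- convergence of M (q n) to M t in L¹
  have hqtend : Tendsto q atTop (𝓝 t) := by
    rw [← NNReal.tendsto_coe]
    have h1 : ∀ n : ℕ, ((q n : ℝ≥0) : ℝ) = (t : ℝ) + (1 : ℝ) / ((n : ℝ) + 1) := by
      intro n
      rw [hqdef]
      push_cast
      rw [one_div]
    simp_rw [h1]
    have h2 := tendsto_one_div_add_atTop_nhds_zero_nat (𝕜 := ℝ)
    have := tendsto_const_nhds (x := (t : ℝ)) (f := atTop (α := ℕ)) |>.add h2
    simpa using this
  have hqUI : UnifIntegrable (fun n => M (q n)) 1 μ :=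
    ((hMinf_int.uniformIntegrable_condExp (fun n => 𝓕.le (q n))).2.1).ae_eq
      fun n => (hterm (q n)).symm
  have hqLp : Tendsto (fun n => eLpNorm (M (q n) - M t) 1 μ) atTop (𝓝 0) := by
    refine tendsto_Lp_finite_of_tendsto_ae le_rfl ENNReal.one_ne_top
      (fun n => (hM.integrable (q n)).1) (memLp_one_iff_integrable.2 (hM.integrable t)) hqUI ?_
    refine Eventually.of_forall fun ω => ?_
    exact ((hcont ω).tendsto t).comp hqtend
  -- ∫_S |M (q n)| tends to 0
  have hZn : ∀ n, ∫ ω in S, |M (q n) ω| ∂μ ≤ (eLpNorm (M (q n) - M t) 1 μ).toReal := by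
    intro n
    have hSm : MeasurableSet S := (𝓕.le t) _ hSmeas
    have h1 : ∫ ω in S, |M (q n) ω| ∂μ = ∫ ω in S, |M (q n) ω - M t ω| ∂μ := by
      refine setIntegral_congr_fun hSm fun ω hω => ?_
      rw [show M t ω = 0 from hω, sub_zero]
    have h2 : ∫ ω in S, |M (q n) ω - M t ω| ∂μ ≤ ∫ ω, |M (q n) ω - M t ω| ∂μ := by
      refine setIntegral_le_integral ((hM.integrable (q n)).sub (hM.integrable t)).abs ?_
      exact Eventually.of_forall fun ω => abs_nonneg _
    have h3 : ∫ ω, |M (q n) ω - M t ω| ∂μ = (eLpNorm (M (q n) - M t) 1 μ).toReal := by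
      rw [eLpNorm_one_eq_lintegral_enorm]
      rw [show (fun ω => |M (q n) ω - M t ω|) = fun ω => ‖(M (q n) - M t) ω‖ by
        funext ω; rw [Real.norm_eq_abs]; rfl]
      exact integral_norm_eq_lintegral_enorm
        ((hM.integrable (q n)).sub (hM.integrable t)).1
    rw [h1]
    exact h2.trans_eq h3
  have hStend : Tendsto (fun n => ∫ ω in S, |M (q n) ω| ∂μ) atTop (𝓝 0) := by
    have htoReal : Tendsto (fun n => (eLpNorm (M (q n) - M t) 1 μ).toReal) atTop (𝓝 0) := by
      have := (ENNReal.tendsto_toReal ENNReal.zero_ne_top).comp hqLp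
      simpa [Function.comp_def] using this
    refine squeeze_zero (fun n => ?_) hZn htoReal
    exact setIntegral_nonneg ((𝓕.le t) _ hSmeas) fun ω _ => abs_nonneg _
  -- conclude A-indicator integral is zero
  have hAmeas : MeasurableSet A := hGt_meas.diff hNZt_meas
  have hAint : Integrable (A.indicator fun ω' => |Minf ω'|) μ :=
    hMinf_int.abs.indicator hAmeas
  have hc0 : ∫ ω, A.indicator (fun ω' => |Minf ω'|) ω ∂μ = 0 := by
    have hub : ∀ n, ∫ ω, A.indicator (fun ω' => |Minf ω'|) ω ∂μ
        ≤ ∫ ω in S, |M (q n) ω| ∂μ := by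
      intro n
      have hInt2 : Integrable ((S ∩ NZq n).indicator fun ω' => |Minf ω'|) μ :=
        hMinf_int.abs.indicator (((𝓕.le t) _ hSmeas).inter (hNZq_meas n))
      have hpt : ∀ ω, A.indicator (fun ω' => |Minf ω'|) ω
          ≤ (S ∩ NZq n).indicator (fun ω' => |Minf ω'|) ω := by
        intro ω
        by_cases hω : ω ∈ A
        · rw [indicator_of_mem hω, indicator_of_mem (hA_sub n hω)]
        · rw [indicator_of_notMem hω]
          exact indicator_nonneg (fun ω' _ => abs_nonneg _) ω
      have h1 : ∫ ω, A.indicator (fun ω' => |Minf ω'|) ω ∂μ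
          ≤ ∫ ω, (S ∩ NZq n).indicator (fun ω' => |Minf ω'|) ω ∂μ :=
        integral_mono hAint hInt2 hpt
      have h2 : ∫ ω, (S ∩ NZq n).indicator (fun ω' => |Minf ω'|) ω ∂μ
          = ∫ ω in S, (NZq n).indicator (fun ω' => |Minf ω'|) ω ∂μ := by
        rw [← Set.indicator_indicator, integral_indicator ((𝓕.le t) _ hSmeas)]
      have h3 : ∫ ω in S, (NZq n).indicator (fun ω' => |Minf ω'|) ω ∂μ
          = ∫ ω in S, |M (q n) ω| ∂μ :=
        main_setIntegral 𝓕 M hM hcont Minf hMinf_int hterm hconv (q n)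
          (𝓕.mono (htq n) _ hSmeas)
      rw [h2, h3] at h1
      exact h1
    have hge : (0:ℝ) ≤ ∫ ω, A.indicator (fun ω' => |Minf ω'|) ω ∂μ :=
      integral_nonneg fun ω => indicator_nonneg (fun ω' _ => abs_nonneg _) ω
    have hle : ∫ ω, A.indicator (fun ω' => |Minf ω'|) ω ∂μ ≤ 0 :=
      ge_of_tendsto hStend (Eventually.of_forall hub)
    exact le_antisymm hle hge
  have hAzero : (A.indicator fun ω' => |Minf ω'|) =ᵐ[μ] 0 :=
    (integral_eq_zero_iff_of_nonneg
      (fun ω => indicator_nonneg (fun ω' _ => abs_nonneg _) ω) hAint).mp hc0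
  -- the statement integrand
  set f : Ω → ℝ := fun ω => |Minf ω| * Gt.indicator (fun _ => (1:ℝ)) ω with hfdef
  have hf_eq : ∀ ω, f ω = Gt.indicator (fun ω' => |Minf ω'|) ω := by
    intro ω
    by_cases h : ω ∈ Gt
    · rw [hfdef]; simp only [indicator_of_mem h, mul_one]
    · rw [hfdef]; simp only [indicator_of_notMem h, mul_zero]
  have hf_int : Integrable f μ := by
    rw [show f = Gt.indicator (fun ω' => |Minf ω'|) from funext hf_eq]
    exact hMinf_int.abs.indicator hGt_meas
  -- pointwise decomposition
  have hdecomp : ∀ ω, Gt.indicator (fun ω' => |Minf ω'|) ω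
      = NZt.indicator (fun ω' => |Minf ω'|) ω + A.indicator (fun ω' => |Minf ω'|) ω := by
    intro ω
    by_cases hNZ : ω ∈ NZt
    · have hG : ω ∈ Gt := hNZt_sub hNZ
      have hA : ω ∉ A := fun h => h.2 hNZ
      rw [indicator_of_mem hG, indicator_of_mem hNZ, indicator_of_notMem hA, add_zero]
    · by_cases hG : ω ∈ Gt
      · have hA : ω ∈ A := ⟨hG, hNZ⟩
        rw [indicator_of_mem hG, indicator_of_notMem hNZ, indicator_of_mem hA, zero_add]
      · have hA : ω ∉ A := fun h => hG h.1
        rw [indicator_of_notMem hG, indicator_of_notMem hNZ, indicator_of_notMem hA,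
          add_zero]
  -- apply uniqueness of conditional expectation
  refine ae_eq_condExp_of_forall_setIntegral_eq (𝓕.le t) hf_int
    (fun s _ _ => (hM.integrable t).abs.integrableOn) (fun s hs _ => ?_) ?_
  · -- set integral identity
    have hsm : MeasurableSet s := (𝓕.le t) _ hs
    have h1 : ∫ ω in s, f ω ∂μ = ∫ ω in s, Gt.indicator (fun ω' => |Minf ω'|) ω ∂μ :=
      setIntegral_congr_fun hsm fun ω _ => hf_eq ω
    have h2 : ∫ ω in s, Gt.indicator (fun ω' => |Minf ω'|) ω ∂μ
        = ∫ ω in s, NZt.indicator (fun ω' => |Minf ω'|) ω ∂μ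
          + ∫ ω in s, A.indicator (fun ω' => |Minf ω'|) ω ∂μ := by
      rw [← integral_add ((hMinf_int.abs.indicator hNZt_meas).restrict)
        (hAint.restrict)]
      exact setIntegral_congr_fun hsm fun ω _ => hdecomp ω
    have h3 : ∫ ω in s, A.indicator (fun ω' => |Minf ω'|) ω ∂μ = 0 := by
      rw [integral_congr_ae (ae_restrict_of_ae hAzero)]
      simp
    have h4 : ∫ ω in s, NZt.indicator (fun ω' => |Minf ω'|) ω ∂μ
        = ∫ ω in s, |M t ω| ∂μ :=
      main_setIntegral 𝓕 M hM hcont Minf hMinf_int hterm hconv t hs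
    rw [h1, h2, h3, h4, add_zero]
  · -- AEStronglyMeasurable'
    have habs : StronglyMeasurable[𝓕 t] fun ω => |M t ω| := by
      have := hsmt.norm
      simpa only [Real.norm_eq_abs] using this
    exact habs.aestronglyMeasurable
end

section
/- Let $X$ be a true submartingale of class $(\Sigma)$, $f:\mathbb{R}_+\to\mathbb{R}_+$ bounded, integrable, strictly positive with $G/f$ bounded, where $G(x)=\int_x^\infty f(y)dy$, and suppose $\mathcal{P}^f$ is a finite measure on $\mathcal{F}$ whose restriction to each $\mathcal{F}_t$ has density $M^f_t=G(A_t)+f(A_t)X_t$ with respect to $\mathbb{P}$. Then for all $u\ge0$, $\mathcal{P}^f[A_\infty>u]\le G(u)$, and consequently $\mathcal{P}^f[A_\infty=\infty]=0$. -/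
open MeasureTheory Filter Set
open scoped NNReal ENNReal Topology

/-- The Lebesgue–Stieltjes measure associated with a monotone continuous function on `ℝ`. -/
noncomputable def lsMeasure (A : ℝ → ℝ) (hmono : Monotone A) (hcont : Continuous A) :
    MeasureTheory.Measure ℝ :=
  StieltjesFunction.measure ⟨A, hmono, fun _ => hcont.continuousWithinAt⟩

/-- The Lebesgue–Stieltjes measure of a monotone continuous function indexed by `ℝ≥0`. -/
noncomputable def lsMeasureNN (A : ℝ≥0 → ℝ) (hmono : Monotone A) (hcont : Continuous A) :
    MeasureTheory.Measure ℝ :=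
  lsMeasure (fun t : ℝ => A (Real.toNNReal t))
    (fun _ _ h => hmono (Real.toNNReal_mono h))
    (hcont.comp continuous_real_toNNReal)

/-- for a true submartingale `X = N + A` of class `(Σ)`, `f > 0` bounded and
integrable with `G/f` bounded (`G x = ∫_x^∞ f`), and `𝒫^f` a finite measure whose
restriction to each `𝓕 t` has density `M^f_t = G(A_t) + f(A_t) X_t` w.r.t. `P`, one has
`𝒫^f[A_∞ > u] ≤ G(u)` for all `u ≥ 0`, hence `𝒫^f[A_∞ = ∞] = 0`. -/
theorem stmt_15 {Ω : Type*} {m : MeasurableSpace Ω} {μ : Measure Ω} [IsProbabilityMeasure μ]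
    (𝓕 : Filtration ℝ≥0 m)
    (hright : ∀ t : ℝ≥0, (𝓕 t : MeasurableSpace Ω) = ⨅ (s : ℝ≥0) (_ : t < s), 𝓕 s)
    (X N A : ℝ≥0 → Ω → ℝ)
    (hXnonneg : ∀ t ω, 0 ≤ X t ω)
    (hdecomp : ∀ t ω, X t ω = N t ω + A t ω)
    (hN : Martingale N 𝓕 μ)
    (hNrc : ∀ ω (t : ℝ≥0), ContinuousWithinAt (fun s => N s ω) (Set.Ici t) t)
    (hNll : ∀ ω (t : ℝ≥0), 0 < t → ∃ l, Tendsto (fun s => N s ω) (𝓝[<] t) (𝓝 l))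
    (hAadapted : Adapted 𝓕 A)
    (hAcont : ∀ ω, Continuous fun t => A t ω)
    (hAmono : ∀ ω, Monotone fun t => A t ω)
    (hA0 : ∀ ω, A 0 ω = 0)
    (hcarried : ∀ ω, lsMeasureNN (fun t => A t ω) (hAmono ω) (hAcont ω)
        {s : ℝ | X (Real.toNNReal s) ω ≠ 0} = 0)
    (f : ℝ → ℝ) (hf_pos : ∀ x, 0 ≤ x → 0 < f x) (hf_nonneg : ∀ x, 0 ≤ f x)
    (hf_bdd : ∃ C, ∀ x, f x ≤ C)
    (hf_int : IntegrableOn f (Set.Ici 0))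
    (G : ℝ → ℝ) (hG : ∀ x, G x = ∫ y in Set.Ioi x, f y)
    (hGf_bdd : ∃ C, ∀ x, 0 ≤ x → G x ≤ C * f x)
    (Pf : Measure Ω) [IsFiniteMeasure Pf]
    (hPf : ∀ (t : ℝ≥0) (Λ : Set Ω), MeasurableSet[𝓕 t] Λ →
      Pf Λ = ∫⁻ ω in Λ, ENNReal.ofReal (G (A t ω) + f (A t ω) * X t ω) ∂μ) :
    (∀ u : ℝ, 0 ≤ u →
      Pf {ω | ENNReal.ofReal u < ⨆ t : ℝ≥0, ENNReal.ofReal (A t ω)}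
        ≤ ENNReal.ofReal (G u)) ∧
    Pf {ω | (⨆ t : ℝ≥0, ENNReal.ofReal (A t ω)) = ⊤} = 0 := by
  classical
  obtain ⟨C, hC⟩ := hf_bdd
  have hC0 : 0 ≤ C := le_trans (hf_pos 0 le_rfl).le (hC 0)
  -- basic facts about G
  have hG_nonneg : ∀ x, 0 ≤ G x := fun x => by
    rw [hG]; exact setIntegral_nonneg measurableSet_Ioi fun y _ => hf_nonneg y
  have hG_anti : ∀ a b : ℝ, 0 ≤ a → a ≤ b → G b ≤ G a := by
    intro a b ha hab
    rw [hG, hG]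
    have hIa : IntegrableOn f (Ioi a) := hf_int.mono_set fun y hy => le_trans ha (le_of_lt hy)
    have h1 : IntegrableOn f (Ioc a b) := hIa.mono_set Set.Ioc_subset_Ioi_self
    have h2 : IntegrableOn f (Ioi b) := hIa.mono_set (Set.Ioi_subset_Ioi hab)
    calc ∫ y in Ioi b, f y
        ≤ (∫ y in Ioc a b, f y) + ∫ y in Ioi b, f y :=
          le_add_of_nonneg_left (setIntegral_nonneg measurableSet_Ioc fun y _ => hf_nonneg y)
      _ = ∫ y in Ioi a, f y := by
          rw [← setIntegral_union Set.Ioc_disjoint_Ioi_same measurableSet_Ioi h1 h2,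
            Set.Ioc_union_Ioi_eq_Ioi hab]
  have hG_cofinal : Tendsto (fun k : ℕ => G k) atTop (𝓝 0) := by
    have hmono : Monotone (fun k : ℕ => Icc (0:ℝ) k) :=
      fun i j hij => Icc_subset_Icc le_rfl (Nat.cast_le.2 hij)
    have hU : (⋃ k : ℕ, Icc (0:ℝ) k) = Ici 0 := by
      ext x
      simp only [mem_iUnion, mem_Icc, mem_Ici]
      constructor
      · rintro ⟨k, h1, _⟩; exact h1
      · intro hx; obtain ⟨k, hk⟩ := exists_nat_ge x; exact ⟨k, hx, hk⟩
    have h1 := tendsto_setIntegral_of_monotone (fun k : ℕ => measurableSet_Icc) hmono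
      (by rw [hU]; exact hf_int)
    rw [hU] at h1
    have h2 : ∀ k : ℕ, G k = (∫ y in Ici (0:ℝ), f y) - ∫ y in Icc (0:ℝ) k, f y := by
      intro k
      rw [hG]
      have h1' : IntegrableOn f (Icc (0:ℝ) k) := hf_int.mono_set Set.Icc_subset_Ici_self
      have h2' : IntegrableOn f (Ioi (k:ℝ)) :=
        hf_int.mono_set fun y hy => Set.mem_Ici.2 (le_trans (Nat.cast_nonneg k) hy.le)
      have hdisj : Disjoint (Icc (0:ℝ) k) (Ioi (k:ℝ)) :=
        (Set.Iic_disjoint_Ioi le_rfl).mono_left Set.Icc_subset_Iic_self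
      have := setIntegral_union hdisj measurableSet_Ioi h1' h2'
      rw [Set.Icc_union_Ioi_eq_Ici (Nat.cast_nonneg k)] at this
      rw [this]; ring
    simp only [h2]
    have := h1.const_sub (∫ y in Ici (0:ℝ), f y)
    simpa using this
  -- X is adapted
  have hXmeas : ∀ s : ℝ≥0, StronglyMeasurable[𝓕 s] (X s) := by
    intro s
    have hXeq : X s = fun ω => N s ω + A s ω := funext fun ω => hdecomp s ω
    rw [hXeq]
    exact (hN.stronglyAdapted s).add (hAadapted s).stronglyMeasurable
  have hAsetmeas : ∀ (s : ℝ≥0) (c : ℝ), MeasurableSet[𝓕 s] {ω | c < A s ω} :=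
    fun s c => measurableSet_lt measurable_const (hAadapted s)
  -- THE CORE ESTIMATE
  have hcore : ∀ u : ℝ, 0 ≤ u → ∀ t : ℕ, Pf {ω | u < A (t:ℝ≥0) ω} ≤ ENNReal.ofReal (G u) := by
    intro u hu t
    set Λ : Set Ω := {ω | u < A (t:ℝ≥0) ω} with hΛdef
    have hΛmeasF : MeasurableSet[𝓕 (t:ℝ≥0)] Λ := hAsetmeas (t:ℝ≥0) u
    -- dyadic grid
    set d : ℕ → ℕ → ℝ≥0 := fun n k => (k : ℝ≥0) / 2 ^ n with hd
    set K : ℕ → ℕ := fun n => t * 2 ^ n with hK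
    have h2n : ∀ n : ℕ, (0:ℝ≥0) < 2 ^ n := fun n => pow_pos two_pos n
    have hdmono : ∀ n, Monotone (d n) := by
      intro n i j hij
      simp only [hd]
      gcongr <;> exact_mod_cast hij
    have hdK : ∀ n, d n (K n) = (t:ℝ≥0) := by
      intro n
      simp only [hd, hK]
      push_cast
      exact mul_div_cancel_right₀ _ (ne_of_gt (h2n n))
    have hdle : ∀ n k, k ≤ K n → d n k ≤ (t:ℝ≥0) := fun n k h => (hdK n) ▸ hdmono n h
    -- the discretized hitting index
    set km : ℕ → Ω → ℕ := fun n ω => sInf {k : ℕ | K n ≤ k ∨ u < A (d n k) ω} with hkm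
    have hKmem : ∀ n ω, K n ∈ {k : ℕ | K n ≤ k ∨ u < A (d n k) ω} := fun n ω => Or.inl le_rfl
    have hkm_le : ∀ n ω, km n ω ≤ K n := fun n ω => Nat.sInf_le (hKmem n ω)
    have hkm_spec : ∀ n ω, K n ≤ km n ω ∨ u < A (d n (km n ω)) ω :=
      fun n ω => Nat.sInf_mem (⟨K n, hKmem n ω⟩ : Set.Nonempty _)
    have hkm_min : ∀ n ω j, j < km n ω → A (d n j) ω ≤ u := by
      intro n ω j hj
      have h := Nat.notMem_of_lt_sInf hj
      simp only [mem_setOf_eq, not_or, not_le, not_lt] at h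
      exact h.2
    have hkm_minK : ∀ n ω j, j < km n ω → j < K n := by
      intro n ω j hj
      have h := Nat.notMem_of_lt_sInf hj
      simp only [mem_setOf_eq, not_or, not_le, not_lt] at h
      exact h.1
    have hpiece_A : ∀ n ω, ω ∈ Λ → u < A (d n (km n ω)) ω := by
      intro n ω hω
      rcases hkm_spec n ω with h | h
      · have hkK : km n ω = K n := le_antisymm (hkm_le n ω) h
        rw [hkK, hdK n]; exact hω
      · exact h
    have hsubΛ : ∀ n ω, u < A (d n (km n ω)) ω → ω ∈ Λ := fun n ω h =>
      lt_of_lt_of_le h (hAmono ω (hdle n _ (hkm_le n ω)))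
    -- measurability of the hitting index level sets
    have hkm_eq : ∀ n k, k ≤ K n → {ω | km n ω = k} =
        {ω | K n ≤ k ∨ u < A (d n k) ω} ∩ ⋂ j ∈ Finset.range k, {ω | A (d n j) ω ≤ u} := by
      intro n k hkK
      ext ω
      simp only [mem_setOf_eq, mem_inter_iff, mem_iInter, Finset.mem_range]
      constructor
      · intro h
        refine ⟨h ▸ hkm_spec n ω, fun j hj => hkm_min n ω j (h ▸ hj)⟩
      · rintro ⟨h1, h2⟩
        have hle : km n ω ≤ k := Nat.sInf_le h1
        rcases lt_or_eq_of_le hle with hlt | heq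
        · exfalso
          rcases hkm_spec n ω with hc | hc
          · omega
          · exact absurd hc (not_lt.2 (h2 _ hlt))
        · exact heq
    have hkm_meas : ∀ n k, k ≤ K n → MeasurableSet[𝓕 (d n k)] {ω | km n ω = k} := by
      intro n k hkK
      rw [hkm_eq n k hkK]
      apply MeasurableSet.inter
      · rcases le_or_gt (K n) k with h | h
        · have huniv : {ω : Ω | K n ≤ k ∨ u < A (d n k) ω} = univ :=
            eq_univ_of_forall fun ω => Or.inl h
          rw [huniv]; exact MeasurableSet.univ
        · have heq : {ω : Ω | K n ≤ k ∨ u < A (d n k) ω} = {ω | u < A (d n k) ω} := by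
            ext ω; simp [not_le.2 h]
          rw [heq]; exact hAsetmeas _ _
      · refine MeasurableSet.biInter (Finset.range k).countable_toSet ?_
        intro j hj
        have hjk : j < k := Finset.mem_range.1 hj
        have hm : MeasurableSet[𝓕 (d n j)] {ω | A (d n j) ω ≤ u} :=
          measurableSet_le (hAadapted _) measurable_const
        exact 𝓕.mono (hdmono n hjk.le) _ hm
    have hΛinter : ∀ n k, k < K n → Λ ∩ {ω | km n ω = k} = {ω | km n ω = k} := by
      intro n k hkK
      refine inter_eq_self_of_subset_right ?_
      intro ω hω
      rcases hkm_spec n ω with h | h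
      · exact absurd (lt_of_le_of_lt (hω ▸ h) hkK) (lt_irrefl _)
      · exact hsubΛ n ω h
    -- the key pointwise convergence fact
    have hpointwise : ∀ ω, ω ∈ Λ → ∀ δ : ℝ, 0 < δ →
        ∃ Nb : ℕ, ∀ n, Nb ≤ n → X (d n (km n ω)) ω ≤ δ := by
      intro ω hωΛ δ hδ
      set τ : ℝ≥0 := sInf {s : ℝ≥0 | u < A s ω} with hτdef
      have hne : {s : ℝ≥0 | u < A s ω}.Nonempty := ⟨(t:ℝ≥0), hωΛ⟩
      have hτ_le : ∀ s : ℝ≥0, u < A s ω → τ ≤ s := fun s hs =>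
        csInf_le (OrderBot.bddBelow _) hs
      have hτ_lt : ∀ s : ℝ≥0, τ < s → u < A s ω := by
        intro s hs
        obtain ⟨s', hs', hs'2⟩ := exists_lt_of_csInf_lt hne hs
        exact lt_of_lt_of_le hs' (hAmono ω hs'2.le)
      have hAτ_le : A τ ω ≤ u := by
        rcases eq_or_ne τ 0 with h0 | h0
        · rw [h0, hA0 ω]; exact hu
        · have hne' : (𝓝[<] τ).NeBot :=
            nhdsWithin_Iio_self_neBot' ⟨0, pos_iff_ne_zero.2 h0⟩
          have hlim : Tendsto (fun s => A s ω) (𝓝[<] τ) (𝓝 (A τ ω)) :=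
            ((hAcont ω).continuousAt (x := τ)).continuousWithinAt
          refine le_of_tendsto hlim ?_
          filter_upwards [self_mem_nhdsWithin] with s hs
          by_contra hcon
          exact absurd (hτ_le s (not_le.1 hcon)) (not_le.2 hs)
      have hτt : τ < (t:ℝ≥0) :=
        (hτ_le _ hωΛ).lt_of_ne fun h => absurd hωΛ (not_lt.2 (h ▸ hAτ_le))
      have hXrc : ContinuousWithinAt (fun s => X s ω) (Ici τ) τ := by
        have hXeq : (fun s => X s ω) = fun s => N s ω + A s ω := funext fun s => hdecomp s ω
        rw [hXeq]
        exact (hNrc ω τ).add ((hAcont ω).continuousWithinAt)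
      have hXτ : X τ ω = 0 := by
        rcases eq_or_lt_of_le (hXnonneg τ ω) with h | h
        · exact h.symm
        · exfalso
          have hev : ∀ᶠ s in 𝓝[≥] τ, 0 < X s ω := hXrc.eventually (eventually_gt_nhds h)
          obtain ⟨b, hτb, hball⟩ := (nhdsGE_basis_Ico τ).eventually_iff.1 hev
          obtain ⟨c, hc1, hc2⟩ := exists_between hτb
          have hsub : Ioc (τ:ℝ) (c:ℝ) ⊆ {s : ℝ | X (Real.toNNReal s) ω ≠ 0} := by
            intro s hs
            have h1 : τ < Real.toNNReal s := Real.lt_toNNReal_iff_coe_lt.2 hs.1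
            have h2 : Real.toNNReal s ≤ c := Real.toNNReal_le_iff_le_coe.2 hs.2
            have : Real.toNNReal s ∈ Ico τ b := ⟨h1.le, lt_of_le_of_lt h2 hc2⟩
            exact ne_of_gt (hball this)
          have hle0 : lsMeasureNN (fun s => A s ω) (hAmono ω) (hAcont ω) (Ioc (τ:ℝ) (c:ℝ)) = 0 :=
            le_antisymm ((hcarried ω) ▸ measure_mono hsub) zero_le
          have hIoc : lsMeasureNN (fun s => A s ω) (hAmono ω) (hAcont ω) (Ioc (τ:ℝ) (c:ℝ)) =
              ENNReal.ofReal (A (Real.toNNReal (c:ℝ)) ω - A (Real.toNNReal (τ:ℝ)) ω) :=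
            StieltjesFunction.measure_Ioc _ _ _
          rw [hIoc, Real.toNNReal_coe, Real.toNNReal_coe] at hle0
          have hAc_le : A c ω ≤ A τ ω := by
            have := ENNReal.ofReal_eq_zero.1 hle0
            linarith
          exact absurd (hτ_lt c hc1) (not_lt.2 (le_trans hAc_le hAτ_le))
      -- now find the neighborhood where X < δ
      have hXrc0 : Tendsto (fun s => X s ω) (𝓝[≥] τ) (𝓝 0) := by
        rw [← hXτ]; exact hXrc
      have hev : ∀ᶠ s in 𝓝[≥] τ, X s ω < δ := hXrc0.eventually (eventually_lt_nhds hδ)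
      obtain ⟨b, hτb, hball⟩ := (nhdsGE_basis_Ico τ).eventually_iff.1 hev
      set c : ℝ≥0 := min b (t:ℝ≥0) with hcdef
      have hτc : τ < c := lt_min hτb hτt
      obtain ⟨Nb, hNb⟩ := NNReal.exists_pow_lt_of_lt_one (tsub_pos_of_lt hτc)
        (by
          rw [← NNReal.coe_lt_coe]; norm_num : (2:ℝ≥0)⁻¹ < 1)
      refine ⟨Nb, fun n hn => ?_⟩
      have hstep : ((2:ℝ≥0) ^ n)⁻¹ ≤ (2:ℝ≥0)⁻¹ ^ Nb := by
        rw [← inv_pow]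
        exact pow_le_pow_right_of_le_one' (by norm_num) hn
      set k1 : ℕ := Nat.floor ((τ:ℝ≥0) * 2 ^ n) + 1 with hk1def
      have hτk1 : τ < d n k1 := by
        simp only [hd]
        rw [lt_div_iff₀ (h2n n)]
        calc τ * 2 ^ n < ↑(Nat.floor ((τ:ℝ≥0) * 2 ^ n)) + 1 := Nat.lt_floor_add_one _
          _ = (k1 : ℝ≥0) := by rw [hk1def]; push_cast; ring
      have hk1_le : d n k1 ≤ τ + ((2:ℝ≥0) ^ n)⁻¹ := by
        simp only [hd]
        rw [div_le_iff₀ (h2n n)]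
        rw [hk1def]
        push_cast
        calc (↑(Nat.floor ((τ:ℝ≥0) * 2 ^ n)) : ℝ≥0) + 1 ≤ τ * 2 ^ n + 1 := by
              gcongr <;> exact Nat.floor_le zero_le
          _ = (τ + ((2:ℝ≥0) ^ n)⁻¹) * 2 ^ n := by
              rw [add_mul, inv_mul_cancel₀ (ne_of_gt (h2n n))]
      have hdk1_lt_c : d n k1 < c := by
        calc d n k1 ≤ τ + ((2:ℝ≥0) ^ n)⁻¹ := hk1_le
          _ ≤ τ + (2:ℝ≥0)⁻¹ ^ Nb := by gcongr
          _ < τ + (c - τ) := by exact add_lt_add_right hNb τ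
          _ = c := add_tsub_cancel_of_le hτc.le
      have hk1K : k1 ≤ K n := by
        by_contra hcon
        push_neg at hcon
        have hlt : d n (K n) < d n k1 := by
          simp only [hd]
          gcongr <;> first | exact h2n n | exact_mod_cast hcon
        rw [hdK n] at hlt
        exact absurd (lt_trans hdk1_lt_c (lt_of_le_of_lt (min_le_right b (t:ℝ≥0)) hlt))
          (lt_irrefl _)
      have hkm_le_k1 : km n ω ≤ k1 := Nat.sInf_le (Or.inr (hτ_lt _ hτk1))
      have hmem : d n (km n ω) ∈ Ico τ b := by
        constructor
        · exact hτ_le _ (hpiece_A n ω hωΛ)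
        · calc d n (km n ω) ≤ d n k1 := hdmono n hkm_le_k1
            _ < c := hdk1_lt_c
            _ ≤ b := min_le_left _ _
      exact (hball hmem).le
    -- the key quantitative estimate for each δ > 0
    have key : ∀ δ : ℝ, 0 < δ → Pf Λ ≤ ENNReal.ofReal (G u + C * δ) := by
      intro δ hδ
      set Sk : ℕ → ℕ → Set Ω := fun n k => (Λ ∩ {ω | km n ω = k}) ∩ {ω | X (d n k) ω ≤ δ}
        with hSkdef
      set Fn : ℕ → Set Ω := fun n => Λ ∩ {ω | δ < X (d n (km n ω)) ω} with hFndef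
      have hSk_measF : ∀ n k, k ≤ K n → MeasurableSet[𝓕 (d n k)] (Sk n k) := by
        intro n k hkK
        have hXle : MeasurableSet[𝓕 (d n k)] {ω | X (d n k) ω ≤ δ} :=
          measurableSet_le (hXmeas (d n k)).measurable measurable_const
        rcases lt_or_eq_of_le hkK with hlt | heq
        · have : Sk n k = {ω | km n ω = k} ∩ {ω | X (d n k) ω ≤ δ} := by
            simp only [hSkdef]; rw [hΛinter n k hlt]
          rw [this]
          exact (hkm_meas n k hkK).inter hXle
        · refine MeasurableSet.inter (MeasurableSet.inter ?_ (hkm_meas n k hkK)) hXle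
          have : 𝓕 (d n k) = 𝓕 (t:ℝ≥0) := by rw [heq, hdK n]
          rw [this]
          exact hΛmeasF
      have hSk_meas : ∀ n k, k ≤ K n → MeasurableSet (Sk n k) :=
        fun n k hkK => 𝓕.le _ _ (hSk_measF n k hkK)
      have hPf_piece : ∀ n k, k ≤ K n →
          Pf (Sk n k) ≤ ENNReal.ofReal (G u + C * δ) * μ (Sk n k) := by
        intro n k hkK
        rw [hPf (d n k) _ (hSk_measF n k hkK)]
        calc ∫⁻ ω in Sk n k,
              ENNReal.ofReal (G (A (d n k) ω) + f (A (d n k) ω) * X (d n k) ω) ∂μ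
            ≤ ∫⁻ _ω in Sk n k, ENNReal.ofReal (G u + C * δ) ∂μ := by
              refine lintegral_mono_ae ((ae_restrict_iff' (hSk_meas n k hkK)).2
                (ae_of_all μ fun ω hω => ?_))
              obtain ⟨⟨hωΛ, hωk⟩, hωX⟩ := hω
              apply ENNReal.ofReal_le_ofReal
              have hA_ge : u < A (d n k) ω := by
                have h := hpiece_A n ω hωΛ
                rwa [hωk] at h
              have h1 : G (A (d n k) ω) ≤ G u := hG_anti u _ hu hA_ge.le
              have h2 : f (A (d n k) ω) * X (d n k) ω ≤ C * δ :=
                mul_le_mul (hC _) hωX (hXnonneg _ _) hC0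
              linarith
          _ = ENNReal.ofReal (G u + C * δ) * μ (Sk n k) := setLIntegral_const _ _
      have hcover : ∀ n, Λ ⊆ (⋃ k ∈ Finset.range (K n + 1), Sk n k) ∪ Fn n := by
        intro n ω hω
        rcases le_or_gt (X (d n (km n ω)) ω) δ with h | h
        · left
          refine mem_iUnion₂.2 ⟨km n ω, Finset.mem_range.2 (Nat.lt_succ_of_le (hkm_le n ω)), ?_⟩
          exact ⟨⟨hω, rfl⟩, h⟩
        · right; exact ⟨hω, h⟩
      have hdisj : ∀ n, Set.PairwiseDisjoint ↑(Finset.range (K n + 1)) (Sk n) := by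
        intro n i _ j _ hij
        refine Set.disjoint_left.2 ?_
        rintro ω ⟨⟨_, h1⟩, _⟩ ⟨⟨_, h2⟩, _⟩
        exact hij (h1.symm.trans h2)
      have hsum : ∀ n, (∑ k ∈ Finset.range (K n + 1), Pf (Sk n k)) ≤
          ENNReal.ofReal (G u + C * δ) := by
        intro n
        calc (∑ k ∈ Finset.range (K n + 1), Pf (Sk n k))
            ≤ ∑ k ∈ Finset.range (K n + 1), ENNReal.ofReal (G u + C * δ) * μ (Sk n k) :=
              Finset.sum_le_sum fun k hk =>
                hPf_piece n k (Nat.lt_succ_iff.1 (Finset.mem_range.1 hk))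
          _ = ENNReal.ofReal (G u + C * δ) * ∑ k ∈ Finset.range (K n + 1), μ (Sk n k) := by
              rw [Finset.mul_sum]
          _ = ENNReal.ofReal (G u + C * δ) * μ (⋃ k ∈ Finset.range (K n + 1), Sk n k) := by
              rw [measure_biUnion_finset (hdisj n)
                (fun k hk => hSk_meas n k (Nat.lt_succ_iff.1 (Finset.mem_range.1 hk)))]
          _ ≤ ENNReal.ofReal (G u + C * δ) * 1 := by
              gcongr
              exact prob_le_one
          _ = ENNReal.ofReal (G u + C * δ) := mul_one _
      have hΛmeas : MeasurableSet Λ := 𝓕.le _ _ hΛmeasF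
      have hFn_meas : ∀ n, MeasurableSet (Fn n) := by
        intro n
        have hFeq : Fn n = ⋃ k ∈ Finset.range (K n + 1),
            ((Λ ∩ {ω | km n ω = k}) ∩ {ω | δ < X (d n k) ω}) := by
          ext ω
          simp only [hFndef, mem_iUnion, mem_inter_iff, mem_setOf_eq, Finset.mem_range,
            exists_prop]
          constructor
          · rintro ⟨h1, h2⟩
            exact ⟨km n ω, Nat.lt_succ_of_le (hkm_le n ω), ⟨⟨h1, rfl⟩, h2⟩⟩
          · rintro ⟨k, _, ⟨⟨h1, hk⟩, h2⟩⟩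
            refine ⟨h1, ?_⟩
            rw [hk]; exact h2
        rw [hFeq]
        refine MeasurableSet.biUnion (Finset.range (K n + 1)).countable_toSet ?_
        intro k hk
        have hkK : k ≤ K n := Nat.lt_succ_iff.1 (Finset.mem_range.1 hk)
        have h2 : MeasurableSet {ω | km n ω = k} := 𝓕.le _ _ (hkm_meas n k hkK)
        have h3 : MeasurableSet {ω | δ < X (d n k) ω} :=
          𝓕.le _ _ (measurableSet_lt measurable_const (hXmeas (d n k)).measurable)
        exact ((hΛmeas.inter h2).inter h3)
      set Un : ℕ → Set Ω := fun n => ⋃ (mz : ℕ) (_ : n ≤ mz), Fn mz with hUndef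
      have hUn_meas : ∀ n, MeasurableSet (Un n) :=
        fun n => MeasurableSet.iUnion fun mz => MeasurableSet.iUnion fun _ => hFn_meas mz
      have hUn_anti : Antitone Un := by
        intro i j hij
        exact iUnion₂_subset fun mz hmz => subset_iUnion₂ (s := fun mz _ => Fn mz) mz
          (le_trans hij hmz)
      have hUn_inter : (⋂ n, Un n) = ∅ := by
        rw [eq_empty_iff_forall_notMem]
        intro ω hω
        rw [mem_iInter] at hω
        obtain ⟨m0, hm0, hF0⟩ := mem_iUnion₂.1 (hω 0)
        obtain ⟨Nb, hNb⟩ := hpointwise ω hF0.1 δ hδ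
        obtain ⟨m1, hm1, hF1⟩ := mem_iUnion₂.1 (hω Nb)
        exact absurd hF1.2 (not_lt.2 (hNb m1 hm1))
      have hUn_tendsto : Tendsto (fun n => Pf (Un n)) atTop (𝓝 0) := by
        have ht := tendsto_measure_iInter_atTop (μ := Pf)
          (fun n => (hUn_meas n).nullMeasurableSet) hUn_anti ⟨0, measure_ne_top _ _⟩
        rw [hUn_inter, measure_empty] at ht
        exact ht
      have hchain : ∀ n, Pf Λ ≤ ENNReal.ofReal (G u + C * δ) + Pf (Un n) := by
        intro n
        calc Pf Λ ≤ Pf ((⋃ k ∈ Finset.range (K n + 1), Sk n k) ∪ Fn n) :=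
              measure_mono (hcover n)
          _ ≤ Pf (⋃ k ∈ Finset.range (K n + 1), Sk n k) + Pf (Fn n) := measure_union_le _ _
          _ ≤ (∑ k ∈ Finset.range (K n + 1), Pf (Sk n k)) + Pf (Fn n) :=
              add_le_add_left (measure_biUnion_finset_le _ _) _
          _ ≤ ENNReal.ofReal (G u + C * δ) + Pf (Un n) := by
              refine add_le_add (hsum n) (measure_mono ?_)
              exact subset_iUnion₂ (s := fun mz _ => Fn mz) n le_rfl
      refine ENNReal.le_of_forall_pos_le_add fun ε hε _ => ?_
      obtain ⟨n, hn⟩ := (hUn_tendsto.eventually_lt_const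
        (by exact_mod_cast hε : (0:ℝ≥0∞) < (ε:ℝ≥0∞))).exists
      exact le_trans (hchain n) (add_le_add_right hn.le _)
    -- conclude the core estimate
    have hlim : Tendsto (fun j : ℕ => ENNReal.ofReal (G u + C * (1 / ((j:ℝ) + 1)))) atTop
        (𝓝 (ENNReal.ofReal (G u))) := by
      have h1 : Tendsto (fun j : ℕ => G u + C * (1 / ((j:ℝ) + 1))) atTop (𝓝 (G u + C * 0)) :=
        tendsto_const_nhds.add (tendsto_const_nhds.mul tendsto_one_div_add_atTop_nhds_zero_nat)
      rw [mul_zero, add_zero] at h1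
      exact ENNReal.tendsto_ofReal h1
    exact ge_of_tendsto hlim (Eventually.of_forall fun j => key (1/((j:ℝ)+1)) (by positivity))
  -- assemble the two statements
  have hmain : ∀ u : ℝ, 0 ≤ u →
      Pf {ω | ENNReal.ofReal u < ⨆ s : ℝ≥0, ENNReal.ofReal (A s ω)} ≤ ENNReal.ofReal (G u) := by
    intro u hu
    have hset : {ω | ENNReal.ofReal u < ⨆ s : ℝ≥0, ENNReal.ofReal (A s ω)} =
        ⋃ n : ℕ, {ω | u < A (n:ℝ≥0) ω} := by
      ext ω
      simp only [mem_setOf_eq, mem_iUnion, lt_iSup_iff]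
      constructor
      · rintro ⟨s, hs⟩
        have hus : u < A s ω := by
          by_contra h
          exact absurd hs (not_lt.2 (ENNReal.ofReal_le_ofReal (not_lt.1 h)))
        obtain ⟨n, hn⟩ := exists_nat_ge s
        exact ⟨n, lt_of_lt_of_le hus (hAmono ω hn)⟩
      · rintro ⟨n, hn⟩
        exact ⟨(n:ℝ≥0), (ENNReal.ofReal_lt_ofReal_iff_of_nonneg hu).2 hn⟩
    rw [hset]
    have hmono : Monotone (fun n : ℕ => {ω | u < A (n:ℝ≥0) ω}) := by
      intro i j hij ω hω
      exact lt_of_lt_of_le hω (hAmono ω (by exact_mod_cast Nat.cast_le.2 hij))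
    rw [hmono.measure_iUnion]
    exact iSup_le fun n => hcore u hu n
  refine ⟨hmain, ?_⟩
  have hbound : ∀ mq : ℕ, Pf {ω | (⨆ s : ℝ≥0, ENNReal.ofReal (A s ω)) = ⊤} ≤
      ENNReal.ofReal (G mq) := by
    intro mq
    refine le_trans (measure_mono ?_) (hmain mq (Nat.cast_nonneg mq))
    intro ω hω
    simp only [mem_setOf_eq] at hω ⊢
    rw [hω]
    exact ENNReal.ofReal_lt_top
  have htend : Tendsto (fun mq : ℕ => ENNReal.ofReal (G mq)) atTop (𝓝 0) := by
    simpa using ENNReal.tendsto_ofReal hG_cofinal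
  have hle0 : Pf {ω | (⨆ s : ℝ≥0, ENNReal.ofReal (A s ω)) = ⊤} ≤ 0 :=
    ge_of_tendsto htend (Eventually.of_forall hbound)
  exact le_antisymm hle0 zero_le
end
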